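/- Let U : S(ℝⁿ) → S(ℝⁿ) be a bijection satisfying, for all f, g ∈ S(ℝⁿ): (1) U(f + ḡ) = U(f) + conj(U(g)), (2) U(f·g) = U(f)·U(g), (3) U(f ∗ g) = U(f) ∗ U(g). Then for every x₀ ∈ ℝⁿ there exists y₀ ∈ ℝⁿ such that for every f ∈ S(ℝⁿ): f(x₀) ≠ 0 if and only if Uf(y₀) ≠ 0. -/

import Mathlib

open MeasureTheory SchwartzMap Complex Metric

namespace Stmt5Aux

variable {E : Type*} [NormedAddCommGroup E] [InnerProductSpace ℝ E] [FiniteDimensional ℝ E]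

set_option linter.unusedSectionVars false

lemma schwartz_temperate (f : 𝓢(E, ℂ)) : Function.HasTemperateGrowth ⇑f := by
  refine ⟨f.smooth', fun n => ?_⟩
  obtain ⟨C, hC⟩ := f.decay 0 n
  exact ⟨0, C, fun x => by simpa using hC.2 x⟩

noncomputable def mulS (f g : 𝓢(E, ℂ)) : 𝓢(E, ℂ) :=
  SchwartzMap.bilinLeftCLM (ContinuousLinearMap.mul ℝ ℂ) (schwartz_temperate g) f

lemma mulS_apply (f g : 𝓢(E, ℂ)) (x : E) : mulS f g x = f x * g x := rfl

noncomputable def ofCS (f : E → ℂ) (h1 : ContDiff ℝ (⊤ : ℕ∞) f) (h2 : HasCompactSupport f) :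
    𝓢(E, ℂ) where
  toFun := f
  smooth' := h1
  decay' := by
    intro k m
    obtain ⟨R, hR0, hR⟩ : ∃ R > 0, tsupport f ⊆ Metric.closedBall 0 R := by
      obtain ⟨R, hR⟩ := h2.isBounded.subset_closedBall 0
      exact ⟨max R 1, by positivity,
        hR.trans (Metric.closedBall_subset_closedBall (le_max_left _ _))⟩
    obtain ⟨M, hM⟩ :=
      ((h1.iteratedFDeriv_right (m := m) (mod_cast le_top)).continuous).bounded_above_of_compact_support
      (h2.iteratedFDeriv m)
    have hM0 : 0 ≤ M := le_trans (norm_nonneg _) (hM 0)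
    refine ⟨R ^ k * M, fun x => ?_⟩
    by_cases hx : x ∈ tsupport f
    · have hxR : ‖x‖ ≤ R := by simpa using hR hx
      have h1' : ‖x‖ ^ k ≤ R ^ k := pow_le_pow_left₀ (norm_nonneg x) hxR k
      exact mul_le_mul h1' (hM x) (norm_nonneg _) (by positivity)
    · have hz : iteratedFDeriv ℝ m f x = 0 := by
        apply image_eq_zero_of_notMem_tsupport
        exact fun h => hx (tsupport_iteratedFDeriv_subset m h)
      rw [hz]
      simp only [norm_zero, mul_zero]
      positivity

@[simp] lemma ofCS_apply (f : E → ℂ) (h1 : ContDiff ℝ (⊤ : ℕ∞) f) (h2 : HasCompactSupport f)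
    (x : E) : ofCS f h1 h2 x = f x := rfl

/-- A smooth bump as a Schwartz function. -/
noncomputable def bumpS (p : E) {r1 r2 : ℝ} (h1 : 0 < r1) (h2 : r1 < r2) : 𝓢(E, ℂ) :=
  ofCS (fun x => ((⟨r1, r2, h1, h2⟩ : ContDiffBump p) x : ℂ))
    (Complex.ofRealCLM.contDiff.comp (ContDiffBump.contDiff _))
    (by
      apply HasCompactSupport.comp_left (g := (Complex.ofReal : ℝ → ℂ))
        (ContDiffBump.hasCompactSupport _)
      simp)

lemma bumpS_eq_one (p : E) {r1 r2 : ℝ} (h1 : 0 < r1) (h2 : r1 < r2) {x : E}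
    (hx : x ∈ closedBall p r1) : bumpS p h1 h2 x = 1 := by
  have : (⟨r1, r2, h1, h2⟩ : ContDiffBump p) x = 1 :=
    ContDiffBump.one_of_mem_closedBall _ hx
  show ((((⟨r1, r2, h1, h2⟩ : ContDiffBump p) x : ℝ)) : ℂ) = 1
  simp only [this, Complex.ofReal_one]

lemma bumpS_support (p : E) {r1 r2 : ℝ} (h1 : 0 < r1) (h2 : r1 < r2) {x : E}
    (hx : bumpS p h1 h2 x ≠ 0) : x ∈ ball p r2 := by
  have : (⟨r1, r2, h1, h2⟩ : ContDiffBump p) x ≠ 0 := by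
    change ((((⟨r1, r2, h1, h2⟩ : ContDiffBump p) x : ℝ)) : ℂ) ≠ 0 at hx
    exact_mod_cast fun h => hx (by rw [h]; simp)
  have := Function.mem_support.2 this
  rwa [ContDiffBump.support_eq] at this

lemma bumpS_ne_zero (p : E) {r1 r2 : ℝ} (h1 : 0 < r1) (h2 : r1 < r2) :
    bumpS p h1 h2 ≠ 0 := by
  intro h
  have h0 : bumpS p h1 h2 p = 1 := bumpS_eq_one p h1 h2 (mem_closedBall_self h1.le)
  rw [h] at h0
  simp at h0

lemma bumpS_tsupport (p : E) {r1 r2 : ℝ} (h1 : 0 < r1) (h2 : r1 < r2) :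
    tsupport ⇑(bumpS p h1 h2) ⊆ closedBall p r2 := by
  apply closure_minimal _ isClosed_closedBall
  intro x hx
  exact ball_subset_closedBall (bumpS_support p h1 h2 hx)

/-- The key one-sided lemma: for a multiplicative bijection `V` of Schwartz space and any
point `p`, there is a point `q` such that `f p ≠ 0` implies `V f q ≠ 0`. -/
lemma half (V : 𝓢(E, ℂ) → 𝓢(E, ℂ)) (hV : Function.Bijective V)
    (hmul : ∀ f g h : 𝓢(E, ℂ), (∀ x, h x = f x * g x) → ∀ x, V h x = V f x * V g x)
    (p : E) : ∃ q : E, ∀ f : 𝓢(E, ℂ), f p ≠ 0 → V f q ≠ 0 := by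
  -- V 0 = 0
  have hV0 : V 0 = 0 := by
    obtain ⟨g, hg⟩ := hV.2 0
    have h0 : ∀ x, (0 : 𝓢(E, ℂ)) x = (0 : 𝓢(E, ℂ)) x * g x := by intro x; simp
    have hm := hmul 0 g 0 h0
    ext x
    rw [hm x, hg]
    simp
  have hVne : ∀ f : 𝓢(E, ℂ), f ≠ 0 → ∃ y, V f y ≠ 0 := by
    intro f hf
    by_contra hcon
    push_neg at hcon
    exact hf (hV.1 (by rw [hV0]; ext y; simp [hcon y]))
  -- bump parameters
  set a : ℕ → ℝ := fun k => 2 * (1/4 : ℝ) ^ k with ha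
  set b : ℕ → ℝ := fun k => 3 * (1/4 : ℝ) ^ k with hb
  have hpow : ∀ k, (0:ℝ) < (1/4 : ℝ) ^ k := fun k => by positivity
  have hab : ∀ k, 0 < a k ∧ a k < b k := fun k => by
    constructor <;> · simp only [ha, hb]; nlinarith [hpow k]
  have hba : ∀ j k, j < k → b k ≤ a j := by
    intro j k hjk
    have h1 : ((1:ℝ)/4) ^ k ≤ (1/4) ^ (j+1) :=
      pow_le_pow_of_le_one (by norm_num) (by norm_num) hjk
    have h2 : ((1:ℝ)/4) ^ (j+1) = (1/4) * (1/4) ^ j := by ring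
    simp only [ha, hb]
    nlinarith [hpow j]
  set F : ℕ → 𝓢(E, ℂ) := fun k => bumpS p (hab k).1 (hab k).2 with hF
  -- key relation: for j < k, F k = F j * F k pointwise
  have hrel : ∀ j k, j < k → ∀ x, F k x = F j x * F k x := by
    intro j k hjk x
    by_cases hx : F k x = 0
    · rw [hx, mul_zero]
    · have hxball : x ∈ ball p (b k) := bumpS_support p _ _ hx
      have hx1 : F j x = 1 := by
        apply bumpS_eq_one
        have : dist x p < b k := mem_ball.1 hxball
        exact mem_closedBall.2 (le_trans this.le (hba j k hjk))
      rw [hx1, one_mul]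
  have hGone : ∀ j k, j < k → ∀ y, V (F k) y ≠ 0 → V (F j) y = 1 := by
    intro j k hjk y hy
    have := hmul (F j) (F k) (F k) (hrel j k hjk) y
    exact mul_right_cancel₀ hy (by rw [← this, one_mul])
  -- the compact sets
  set C : ℕ → Set E := fun k => {y | V (F (k + 1)) y = 1} with hC
  have hCne : ∀ k, (C k).Nonempty := by
    intro k
    obtain ⟨y, hy⟩ := hVne (F (k + 2)) (bumpS_ne_zero p _ _)
    exact ⟨y, hGone (k+1) (k+2) (by omega) y hy⟩
  have hCclosed : ∀ k, IsClosed (C k) := fun k =>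
    isClosed_singleton.preimage (V (F (k+1))).continuous
  have hCcompact : ∀ k, IsCompact (C k) := by
    intro k
    obtain ⟨M, hM0, hM⟩ := (V (F (k+1))).decay 1 0
    refine (isCompact_closedBall (0 : E) M).of_isClosed_subset (hCclosed k) ?_
    intro y hy
    have h1 : ‖y‖ ^ 1 * ‖iteratedFDeriv ℝ 0 (⇑(V (F (k+1)))) y‖ ≤ M := hM y
    rw [norm_iteratedFDeriv_zero, pow_one] at h1
    have h2 : V (F (k+1)) y = 1 := hy
    rw [h2] at h1
    simp only [norm_one, mul_one] at h1
    exact mem_closedBall_zero_iff.2 h1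
  have hCsub : ∀ k, C (k + 1) ⊆ C k := by
    intro k y hy
    have hne : V (F (k + 2)) y ≠ 0 := by
      have : V (F (k+2)) y = 1 := hy
      rw [this]; exact one_ne_zero
    exact hGone (k+1) (k+2) (by omega) y hne
  obtain ⟨y₀, hy₀⟩ := IsCompact.nonempty_iInter_of_sequence_nonempty_isCompact_isClosed
    C hCsub hCne (hCcompact 0) hCclosed
  have hy : ∀ k, V (F (k + 1)) y₀ = 1 := fun k => Set.mem_iInter.1 hy₀ k
  refine ⟨y₀, fun f hf => ?_⟩
  -- choose δ with f ≠ 0 on ball p δ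
  obtain ⟨δ, hδ0, hδ⟩ : ∃ δ > 0, ∀ x ∈ ball p δ, f x ≠ 0 := by
    have hopen : IsOpen {x : E | f x ≠ 0} := isOpen_compl_iff.2 (isClosed_singleton.preimage f.continuous)
    obtain ⟨δ, hδ0, hδ⟩ := Metric.isOpen_iff.1 hopen p hf
    exact ⟨δ, hδ0, fun x hx => hδ hx⟩
  -- choose j = m+1 with b j < δ
  obtain ⟨m, hm⟩ : ∃ m : ℕ, b m < δ := by
    obtain ⟨m, hm⟩ := exists_pow_lt_of_lt_one (by positivity : (0:ℝ) < δ/3) (by norm_num : (1/4 : ℝ) < 1)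
    exact ⟨m, by simp only [hb]; linarith⟩
  set j : ℕ := m + 1 with hj
  have hbj : b j < δ := lt_of_le_of_lt (by
    have : ((1:ℝ)/4) ^ j ≤ (1/4) ^ m := pow_le_pow_of_le_one (by norm_num) (by norm_num) (by omega)
    simp only [hb]; nlinarith) hm
  have htsub : tsupport ⇑(F j) ⊆ ball p δ :=
    (bumpS_tsupport p _ _).trans (closedBall_subset_ball hbj)
  -- the quotient function
  set h : E → ℂ := fun x => F j x * (f x)⁻¹ with hh
  have hsmooth : ContDiff ℝ (⊤ : ℕ∞) h := by
    rw [contDiff_iff_contDiffAt]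
    intro x
    by_cases hfx : f x = 0
    · have hxn : x ∉ tsupport ⇑(F j) := fun hmem => hδ x (htsub hmem) hfx
      have hev : h =ᶠ[nhds x] fun _ => 0 := by
        filter_upwards [(isClosed_tsupport (⇑(F j))).isOpen_compl.mem_nhds hxn] with z hz
        have : F j z = 0 := image_eq_zero_of_notMem_tsupport hz
        simp [hh, this]
      exact (contDiffAt_const (c := (0:ℂ))).congr_of_eventuallyEq hev
    · exact ((F j).smooth'.contDiffAt).mul ((f.smooth'.contDiffAt).inv hfx)
  have hcs : HasCompactSupport h := by
    apply HasCompactSupport.intro (isCompact_closedBall p (b j))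
    intro x hx
    have hxn : x ∉ tsupport ⇑(F j) := fun hmem => hx (bumpS_tsupport p _ _ hmem)
    have : F j x = 0 := image_eq_zero_of_notMem_tsupport hxn
    simp [hh, this]
  set H : 𝓢(E, ℂ) := ofCS h hsmooth hcs with hH
  have hkey : ∀ x, F j x = f x * H x := by
    intro x
    by_cases hfx : f x = 0
    · have hxn : x ∉ tsupport ⇑(F j) := fun hmem => hδ x (htsub hmem) hfx
      have h0 : F j x = 0 := image_eq_zero_of_notMem_tsupport hxn
      rw [h0, hfx, zero_mul]
    · have : H x = F j x * (f x)⁻¹ := rfl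
      rw [this]
      field_simp
  have hfin := hmul f H (F j) hkey y₀
  have h1 : V f y₀ * V H y₀ = 1 := by rw [← hfin, hj, hy m]
  exact left_ne_zero_of_mul_eq_one h1

end Stmt5Aux

open Stmt5Aux

theorem stmt_5 (n : ℕ)
    (U : SchwartzMap (EuclideanSpace ℝ (Fin n)) ℂ → SchwartzMap (EuclideanSpace ℝ (Fin n)) ℂ)
    (hUbij : Function.Bijective U)
    (h1 : ∀ f g h : SchwartzMap (EuclideanSpace ℝ (Fin n)) ℂ,
      (∀ x, h x = f x + starRingEnd ℂ (g x)) →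
      ∀ x, U h x = U f x + starRingEnd ℂ (U g x))
    (h2 : ∀ f g h : SchwartzMap (EuclideanSpace ℝ (Fin n)) ℂ,
      (∀ x, h x = f x * g x) → ∀ x, U h x = U f x * U g x)
    (h3 : ∀ f g h : SchwartzMap (EuclideanSpace ℝ (Fin n)) ℂ,
      (∀ x, h x = ∫ y, f (x - y) * g y) →
      ∀ x, U h x = ∫ y, U f (x - y) * U g y) :
    ∀ x₀ : EuclideanSpace ℝ (Fin n), ∃ y₀ : EuclideanSpace ℝ (Fin n),
      ∀ f : SchwartzMap (EuclideanSpace ℝ (Fin n)) ℂ,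
        f x₀ ≠ 0 ↔ U f y₀ ≠ 0 := by
  intro x₀
  set e : SchwartzMap (EuclideanSpace ℝ (Fin n)) ℂ ≃ SchwartzMap (EuclideanSpace ℝ (Fin n)) ℂ :=
    Equiv.ofBijective U hUbij with he
  have heU : ∀ f, e f = U f := fun f => rfl
  -- U⁻¹ is multiplicative
  have hinvmul : ∀ f g h : 𝓢(EuclideanSpace ℝ (Fin n), ℂ), (∀ x, h x = f x * g x) →
      ∀ x, e.symm h x = e.symm f x * e.symm g x := by
    intro f g h hfg
    have hd : U (mulS (e.symm f) (e.symm g)) = h := by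
      ext x
      rw [h2 (e.symm f) (e.symm g) (mulS _ _) (fun y => mulS_apply _ _ y) x]
      rw [← heU, ← heU, e.apply_symm_apply, e.apply_symm_apply, ← hfg x]
    have : e.symm h = mulS (e.symm f) (e.symm g) := by
      rw [← hd, ← heU, e.symm_apply_apply]
    intro x
    rw [this, mulS_apply]
  obtain ⟨y₀, hy₀⟩ := half U hUbij h2 x₀
  obtain ⟨x₁, hx₁⟩ := half e.symm e.symm.bijective hinvmul y₀
  have hx₁x₀ : x₁ = x₀ := by
    by_contra hne
    have hd : 0 < dist x₀ x₁ := dist_pos.2 (fun hcon => hne hcon.symm)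
    set B : 𝓢(EuclideanSpace ℝ (Fin n), ℂ) := bumpS x₀ (half_pos hd) (half_lt_self hd) with hB
    have hB0 : B x₀ ≠ 0 := by
      rw [hB, bumpS_eq_one x₀ _ _ (Metric.mem_closedBall_self (half_pos hd).le)]
      exact one_ne_zero
    have hUB : U B y₀ ≠ 0 := hy₀ B hB0
    have hBx₁ : B x₁ ≠ 0 := by
      have := hx₁ (U B) hUB
      rwa [← heU, e.symm_apply_apply] at this
    apply hBx₁
    by_contra hcon
    have : x₁ ∈ Metric.ball x₀ (dist x₀ x₁) := bumpS_support x₀ _ _ hcon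
    rw [Metric.mem_ball, dist_comm] at this
    exact lt_irrefl _ this
  refine ⟨y₀, fun f => ⟨hy₀ f, fun hUf => ?_⟩⟩
  have := hx₁ (U f) hUf
  rwa [← heU, e.symm_apply_apply, hx₁x₀] at this
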